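/- Assume the alternating-minimization framework, and assume F and G are θ-separable for some θ ∈ [0,1). Let (f̂, ĝ) be a joint minimizer and let (f_m, g_m), m ≥ 1, be alternating-minimization iterates. Then for every m ≥ 1: ‖f̂ − f_m‖ ≤ θ‖ĝ − g_m‖ and ‖ĝ − g_{m+1}‖ ≤ θ‖f̂ − f_m‖; in particular ‖ĝ − g_{m+1}‖ ≤ θ²‖ĝ − g_m‖, so ‖ĝ − g_m‖ ≤ θ^{2(m−1)}‖ĝ − g₁‖ for all m ≥ 1. (One-step contraction established in the proof of the paper's Theorem 1.) -/
import Mathlib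

open RealInnerProductSpace Filter

/-- Variational inequality for a minimizer of `x ↦ ‖a - x‖² + L x` over a convex set. -/
lemma vi_aux {H : Type*} [NormedAddCommGroup H] [InnerProductSpace ℝ H]
    {C : Set H} (hC : Convex ℝ C) {L : H → ℝ} (hL : ConvexOn ℝ C L)
    (a : H) {xs : H} (hxs : xs ∈ C)
    (hmin : ∀ x ∈ C, ‖a - xs‖ ^ 2 + L xs ≤ ‖a - x‖ ^ 2 + L x)
    {x : H} (hx : x ∈ C) :
    2 * ⟪a - xs, x - xs⟫ ≤ L x - L xs := by
  set d := ‖x - xs‖ ^ 2 with hd'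
  have hd : 0 ≤ d := sq_nonneg _
  have key : ∀ t : ℝ, 0 < t → t ≤ 1 →
      2 * ⟪a - xs, x - xs⟫ - (L x - L xs) ≤ t * d := by
    intro t ht0 ht1
    have hmem : (1 - t) • xs + t • x ∈ C := hC hxs hx (by linarith) ht0.le (by ring)
    have hLle : L ((1 - t) • xs + t • x) ≤ (1 - t) * L xs + t * L x :=
      hL.2 hxs hx (by linarith) ht0.le (by ring)
    have hm := hmin _ hmem
    have heq : a - ((1 - t) • xs + t • x) = (a - xs) - t • (x - xs) := by
      module
    have hnorm : ‖a - ((1 - t) • xs + t • x)‖ ^ 2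
        = ‖a - xs‖ ^ 2 - 2 * t * ⟪a - xs, x - xs⟫ + t ^ 2 * d := by
      rw [heq, norm_sub_sq_real, real_inner_smul_right, norm_smul]
      simp only [Real.norm_eq_abs, mul_pow, sq_abs, hd']
      ring
    rw [hnorm] at hm
    nlinarith [hm, hLle, ht0]
  have hc : 2 * ⟪a - xs, x - xs⟫ - (L x - L xs) ≤ 0 := by
    refine le_of_forall_pos_le_add fun ε hε => ?_
    rw [zero_add]
    have hdp : (0:ℝ) < d + 1 := by linarith
    have ht0 : 0 < min 1 (ε / (d + 1)) := lt_min one_pos (div_pos hε hdp)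
    refine (key _ ht0 (min_le_left _ _)).trans ?_
    have h1 : min 1 (ε / (d + 1)) ≤ ε / (d + 1) := min_le_right _ _
    have h2 : min 1 (ε / (d + 1)) * d ≤ ε / (d + 1) * (d + 1) :=
      mul_le_mul h1 (by linarith) hd (div_pos hε hdp).le
    rw [div_mul_cancel₀ _ hdp.ne'] at h2
    exact h2
  linarith

/-- Combining variational inequalities for two minimizers with different shifts. -/
lemma contr_aux {H : Type*} [NormedAddCommGroup H] [InnerProductSpace ℝ H]
    {C : Set H} (hC : Convex ℝ C) {L : H → ℝ} (hL : ConvexOn ℝ C L)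
    (y b b' : H) {x x' : H} (hx : x ∈ C) (hx' : x' ∈ C)
    (hmx : ∀ z ∈ C, ‖y - b - x‖ ^ 2 + L x ≤ ‖y - b - z‖ ^ 2 + L z)
    (hmx' : ∀ z ∈ C, ‖y - b' - x'‖ ^ 2 + L x' ≤ ‖y - b' - z‖ ^ 2 + L z) :
    ‖x - x'‖ ^ 2 ≤ ⟪x - x', b' - b⟫ := by
  have h1 : 2 * ⟪y - b - x, x' - x⟫ ≤ L x' - L x := vi_aux hC hL (y - b) hx hmx hx'
  have h2 : 2 * ⟪y - b' - x', x - x'⟫ ≤ L x - L x' := vi_aux hC hL (y - b') hx' hmx' hx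
  have e1 : ⟪y - b - x, x' - x⟫ = -⟪y - b - x, x - x'⟫ := by
    rw [← inner_neg_right]; congr 1; module
  have hsum : ⟪(y - b' - x') - (y - b - x), x - x'⟫ ≤ 0 := by
    rw [inner_sub_left]; linarith
  have e2 : (y - b' - x') - (y - b - x) = (b - b') + (x - x') := by module
  rw [e2, inner_add_left, real_inner_self_eq_norm_sq] at hsum
  have e3 : ⟪b - b', x - x'⟫ = -⟪x - x', b' - b⟫ := by
    rw [← neg_sub b' b, inner_neg_left, real_inner_comm]
  linarith

lemma div_trick_aux {a b θ : ℝ} (ha : 0 ≤ a) (hb : 0 ≤ b) (hθ : 0 ≤ θ)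
    (h : a ^ 2 ≤ θ * (a * b)) : a ≤ θ * b := by
  rcases ha.eq_or_lt with h0 | h0
  · rw [← h0]; positivity
  · exact le_of_mul_le_mul_right (by nlinarith) h0

/-- One-step contraction established in the proof of the paper's Theorem 1. -/
theorem altMin_one_step_contraction
    {H : Type*} [NormedAddCommGroup H] [InnerProductSpace ℝ H]
    (F G : Set H) (hF : Convex ℝ F) (hG : Convex ℝ G)
    (y : H) (Lf Lg : H → ℝ)
    (hLf : ConvexOn ℝ F Lf) (hLg : ConvexOn ℝ G Lg)
    (θ : ℝ) (hθ0 : 0 ≤ θ) (hθ1 : θ < 1)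
    (hsep : ∀ f₁ ∈ F, ∀ f₂ ∈ F, ∀ g₁ ∈ G, ∀ g₂ ∈ G,
      |(⟪f₁ - f₂, g₁ - g₂⟫)| ≤ θ * (‖f₁ - f₂‖ * ‖g₁ - g₂‖))
    (fhat ghat : H) (hfhatF : fhat ∈ F) (hghatG : ghat ∈ G)
    (hmin : ∀ f ∈ F, ∀ g ∈ G,
      ‖y - fhat - ghat‖ ^ 2 + Lf fhat + Lg ghat ≤ ‖y - f - g‖ ^ 2 + Lf f + Lg g)
    (f g : ℕ → H) (hf0 : f 0 ∈ F)
    (hfF : ∀ m, 1 ≤ m → f m ∈ F) (hgG : ∀ m, 1 ≤ m → g m ∈ G)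
    (hgstep : ∀ m, 1 ≤ m → ∀ g' ∈ G,
      ‖y - f (m - 1) - g m‖ ^ 2 + Lg (g m) ≤ ‖y - f (m - 1) - g'‖ ^ 2 + Lg g')
    (hfstep : ∀ m, 1 ≤ m → ∀ f' ∈ F,
      ‖y - f m - g m‖ ^ 2 + Lf (f m) ≤ ‖y - f' - g m‖ ^ 2 + Lf f') :
    (∀ m, 1 ≤ m →
      ‖fhat - f m‖ ≤ θ * ‖ghat - g m‖
      ∧ ‖ghat - g (m + 1)‖ ≤ θ * ‖fhat - f m‖
      ∧ ‖ghat - g (m + 1)‖ ≤ θ ^ 2 * ‖ghat - g m‖)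
    ∧ (∀ m, 1 ≤ m → ‖ghat - g m‖ ≤ θ ^ (2 * (m - 1)) * ‖ghat - g 1‖) := by
  -- fhat minimizes over F with ghat fixed
  have hfhat_min : ∀ z ∈ F, ‖y - ghat - fhat‖ ^ 2 + Lf fhat
      ≤ ‖y - ghat - z‖ ^ 2 + Lf z := by
    intro z hz
    have := hmin z hz ghat hghatG
    rw [sub_right_comm y ghat fhat, sub_right_comm y ghat z]
    linarith
  -- ghat minimizes over G with fhat fixed
  have hghat_min : ∀ z ∈ G, ‖y - fhat - ghat‖ ^ 2 + Lg ghat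
      ≤ ‖y - fhat - z‖ ^ 2 + Lg z := by
    intro z hz
    have := hmin fhat hfhatF z hz
    linarith
  have main : ∀ m, 1 ≤ m →
      ‖fhat - f m‖ ≤ θ * ‖ghat - g m‖
      ∧ ‖ghat - g (m + 1)‖ ≤ θ * ‖fhat - f m‖
      ∧ ‖ghat - g (m + 1)‖ ≤ θ ^ 2 * ‖ghat - g m‖ := by
    intro m hm
    have hfm : f m ∈ F := hfF m hm
    have hgm : g m ∈ G := hgG m hm
    have hgm1 : g (m + 1) ∈ G := hgG (m + 1) (by omega)
    -- f-step contraction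
    have hfm_min : ∀ z ∈ F, ‖y - g m - f m‖ ^ 2 + Lf (f m)
        ≤ ‖y - g m - z‖ ^ 2 + Lf z := by
      intro z hz
      have := hfstep m hm z hz
      rw [sub_right_comm y (g m) (f m), sub_right_comm y (g m) z]
      linarith
    have h1 : ‖fhat - f m‖ ^ 2 ≤ ⟪fhat - f m, g m - ghat⟫ :=
      contr_aux hF hLf y ghat (g m) hfhatF hfm hfhat_min hfm_min
    have hsep1 := hsep fhat hfhatF (f m) hfm ghat hghatG (g m) hgm
    have e1 : ⟪fhat - f m, g m - ghat⟫ = -⟪fhat - f m, ghat - g m⟫ := by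
      rw [← inner_neg_right]; congr 1; module
    have hA : ‖fhat - f m‖ ≤ θ * ‖ghat - g m‖ := by
      apply div_trick_aux (norm_nonneg _) (norm_nonneg _) hθ0
      have := neg_abs_le ⟪fhat - f m, ghat - g m⟫
      linarith [h1, e1 ▸ h1]
    -- g-step contraction
    have hgm1_min : ∀ z ∈ G, ‖y - f m - g (m + 1)‖ ^ 2 + Lg (g (m + 1))
        ≤ ‖y - f m - z‖ ^ 2 + Lg z := by
      intro z hz
      have := hgstep (m + 1) (by omega) z hz
      simpa using this
    have h2 : ‖ghat - g (m + 1)‖ ^ 2 ≤ ⟪ghat - g (m + 1), f m - fhat⟫ :=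
      contr_aux hG hLg y fhat (f m) hghatG hgm1 hghat_min hgm1_min
    have hsep2 := hsep fhat hfhatF (f m) hfm ghat hghatG (g (m + 1)) hgm1
    have e2 : ⟪ghat - g (m + 1), f m - fhat⟫ = -⟪fhat - f m, ghat - g (m + 1)⟫ := by
      rw [← neg_sub fhat (f m), inner_neg_right, real_inner_comm]
    have hB : ‖ghat - g (m + 1)‖ ≤ θ * ‖fhat - f m‖ := by
      have h2' : ‖ghat - g (m + 1)‖ ^ 2 ≤ θ * (‖ghat - g (m + 1)‖ * ‖fhat - f m‖) := by
        have := neg_abs_le ⟪fhat - f m, ghat - g (m + 1)⟫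
        rw [e2] at h2
        nlinarith [hsep2]
      exact div_trick_aux (norm_nonneg _) (norm_nonneg _) hθ0 h2'
    refine ⟨hA, hB, ?_⟩
    calc ‖ghat - g (m + 1)‖ ≤ θ * ‖fhat - f m‖ := hB
      _ ≤ θ * (θ * ‖ghat - g m‖) := mul_le_mul_of_nonneg_left hA hθ0
      _ = θ ^ 2 * ‖ghat - g m‖ := by ring
  refine ⟨main, ?_⟩
  intro m hm
  induction m, hm using Nat.le_induction with
  | base => simp
  | succ n hn ih =>
    have hstep := (main n hn).2.2
    have : ‖ghat - g (n + 1)‖ ≤ θ ^ 2 * (θ ^ (2 * (n - 1)) * ‖ghat - g 1‖) :=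
      hstep.trans (mul_le_mul_of_nonneg_left ih (by positivity))
    calc ‖ghat - g (n + 1)‖ ≤ θ ^ 2 * (θ ^ (2 * (n - 1)) * ‖ghat - g 1‖) := this
      _ = θ ^ (2 + 2 * (n - 1)) * ‖ghat - g 1‖ := by rw [pow_add]; ring
      _ = θ ^ (2 * (n + 1 - 1)) * ‖ghat - g 1‖ := by
          congr 2
          omega
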